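/- Let r, s, t be natural numbers and let A be an r × s integer matrix. Suppose there is a set S of row indices with |S| ≤ t such that: for every i ∈ S, the sum over columns j of |A_{ij}| is at most 3; and for every i ∉ S, the row A_i has exactly one nonzero entry, and that entry has absolute value 1 or 2. Let N be the quotient abelian group ℤ^s / R, where R is the subgroup of ℤ^s generated by the rows of A. Then every element of N of finite additive order has order at most 2 · 3^t. -/

import Mathlib

open Matrix Finset in
lemma abs_det_le_prod_sum_abs {ι : Type*} [Fintype ι] [DecidableEq ι] (M : Matrix ι ι ℤ) :
    |M.det| ≤ ∏ i, ∑ j, |M i j| := by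
  rw [← Matrix.det_transpose, Matrix.det_apply]
  refine le_trans (Finset.abs_sum_le_sum_abs _ _) ?_
  have h1 : ∀ σ : Equiv.Perm ι, |Equiv.Perm.sign σ • ∏ i, Mᵀ (σ i) i| = ∏ i, |M i (σ i)| := by
    intro σ
    rcases Int.units_eq_one_or (Equiv.Perm.sign σ) with h | h <;>
      simp [h, abs_prod, Matrix.transpose_apply]
  simp only [h1]
  rw [show (∏ i, ∑ j, |M i j|) = ∑ p ∈ Fintype.piFinset (fun _ : ι => (univ : Finset ι)),
      ∏ i, |M i (p i)| from Finset.prod_univ_sum _ _]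
  rw [Fintype.piFinset_univ]
  have : ∑ σ : Equiv.Perm ι, ∏ i, |M i (σ i)|
      = ∑ p ∈ (univ : Finset (Equiv.Perm ι)).image (fun σ : Equiv.Perm ι => (⇑σ : ι → ι)),
          ∏ i, |M i (p i)| := by
    rw [Finset.sum_image (fun a _ b _ hab => Equiv.coe_fn_injective hab)]
  rw [this]
  exact Finset.sum_le_sum_of_subset_of_nonneg (Finset.subset_univ _)
    (fun p _ _ => Finset.prod_nonneg fun i _ => abs_nonneg _)

open Matrix Finset Submodule in
lemma cramer_key {r s : ℕ} (β : Fin r → (Fin s → ℤ)) (ξ : Fin s → ℤ) (n : ℕ) (hn : 0 < n)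
    (hmem : (n : ℤ) • ξ ∈ Submodule.span ℤ (Set.range β)) :
    ∃ (k : ℕ) (ι : Fin k → Fin r) (d : Fin k → ℤ) (M : ℤ),
      Function.Injective ι ∧ (∀ v, β (ι v) ≠ 0) ∧ 0 < M ∧
      (M ≤ ∏ v, ∑ j, |β (ι v) j|) ∧ M • ξ = ∑ v, d v • β (ι v) := by
  classical
  obtain ⟨c, hc⟩ := (mem_span_range_iff_exists_fun ℤ).mp hmem
  set βq : Fin r → (Fin s → ℚ) := fun i j => (β i j : ℚ) with hβq
  set ξq : Fin s → ℚ := fun j => (ξ j : ℚ) with hξq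
  have hnq : (n : ℚ) ≠ 0 := by positivity
  have hξmem : ξq ∈ span ℚ (Set.range βq) := by
    rw [mem_span_range_iff_exists_fun]
    refine ⟨fun i => (c i : ℚ) / (n : ℚ), ?_⟩
    funext j
    have hcj := congrFun hc j
    simp only [Finset.sum_apply, Pi.smul_apply, smul_eq_mul] at hcj ⊢
    have : ∑ i, (c i : ℚ) * (β i j : ℚ) = (n : ℚ) * (ξ j : ℚ) := by
      exact_mod_cast congrArg (Int.cast : ℤ → ℚ) hcj
    show ∑ i, (c i : ℚ) / (n:ℚ) * (β i j : ℚ) = (ξ j : ℚ)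
    rw [Finset.sum_congr rfl (fun i _ => by
      show (c i : ℚ) / (n:ℚ) * (β i j : ℚ) = ((c i : ℚ) * (β i j : ℚ)) / n; ring),
      ← Finset.sum_div, this, mul_div_cancel_left₀ _ hnq]
  obtain ⟨b, hb_sub, hb_span, hb_ind⟩ := exists_linearIndependent ℚ (Set.range βq)
  haveI : Fintype b := ((Set.finite_range βq).subset hb_sub).fintype
  have pick : ∀ v : b, ∃ i, βq i = (v : Fin s → ℚ) := fun v => hb_sub v.2
  choose idx hidx using pick
  have hidx_inj : Function.Injective idx := by
    intro v u h
    apply Subtype.ext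
    rw [← hidx v, ← hidx u, h]
  have hξb : ξq ∈ span ℚ (Set.range ((↑) : b → (Fin s → ℚ))) := by
    rw [Subtype.range_coe, hb_span]; exact hξmem
  obtain ⟨q, hq⟩ := (mem_span_range_iff_exists_fun ℚ).mp hξb
  -- the matrix of the b-rows
  set Pm : Matrix b (Fin s) ℚ := fun v j => (v : Fin s → ℚ) j with hPm
  have hPm_ind : LinearIndependent ℚ (fun v : b => Pm v) := hb_ind
  have hcols : span ℚ (Set.range Pmᵀ) = ⊤ := by
    apply Submodule.eq_top_of_finrank_eq
    rw [show Pmᵀ = Pm.col from rfl, ← Matrix.rank_eq_finrank_span_cols, hPm_ind.rank_matrix,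
      Module.finrank_fintype_fun_eq_card]
  obtain ⟨w, hw_sub, hw_span, hw_ind⟩ := exists_linearIndependent ℚ (Set.range Pmᵀ)
  haveI : Fintype w := ((Set.finite_range Pmᵀ).subset hw_sub).fintype
  have hw_top : span ℚ w = ⊤ := hw_span.trans hcols
  let wbasis : Module.Basis w ℚ (b → ℚ) :=
    Module.Basis.mk hw_ind (by rw [Subtype.range_coe]; exact hw_top.ge)
  have hcard : Fintype.card w = Fintype.card b := by
    rw [← Module.finrank_eq_card_basis wbasis, Module.finrank_fintype_fun_eq_card]
  let e : b ≃ w := Fintype.equivOfCardEq hcard.symm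
  have pickcol : ∀ u : w, ∃ j, Pmᵀ j = (u : b → ℚ) := fun u => hw_sub u.2
  choose jcol hjcol using pickcol
  have hjcol_inj : Function.Injective jcol := by
    intro u1 u2 h
    apply Subtype.ext
    rw [← hjcol u1, ← hjcol u2, h]
  -- integer square matrix
  set N : Matrix b b ℤ := fun v u => β (idx v) (jcol (e u)) with hN
  set Msq : Matrix b b ℚ := N.map (Int.cast : ℤ → ℚ) with hMsq
  have hMsq_entry : ∀ v u : b, Msq v u = (v : Fin s → ℚ) (jcol (e u)) := by
    intro v u
    have : ((β (idx v) (jcol (e u)) : ℤ) : ℚ) = βq (idx v) (jcol (e u)) := rfl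
    simp only [hMsq, Matrix.map_apply, hN, this, hidx v]
    exact this.trans (by rw [hidx v])
  have hMsq_col : ∀ u : b, (fun v => Msq v u) = ((e u : w) : b → ℚ) := by
    intro u
    funext v
    rw [hMsq_entry, ← hjcol (e u)]
    rfl
  have hMsq_unit : IsUnit Msq := by
    rw [← Matrix.linearIndependent_cols_iff_isUnit]
    have : Msq.col = fun u : b => ((e u : w) : b → ℚ) := by
      funext u
      exact hMsq_col u
    rw [this]
    exact hw_ind.comp e e.injective
  have hdetcast : Msq.det = ((N.det : ℤ) : ℚ) := by
    rw [hMsq]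
    have := RingHom.map_det (Int.castRingHom ℚ) N
    simpa [RingHom.mapMatrix_apply] using this.symm
  have hdet_ne : N.det ≠ 0 := by
    intro h0
    have hu := (Matrix.isUnit_iff_isUnit_det Msq).mp hMsq_unit
    rw [hdetcast, h0] at hu
    simpa using hu.ne_zero
  -- Cramer
  set ξcq : b → ℚ := fun u => ξq (jcol (e u)) with hξcq
  have hvec : Matrix.vecMul q Msq = ξcq := by
    funext u
    have := congrFun hq (jcol (e u))
    simp only [Finset.sum_apply, Pi.smul_apply, smul_eq_mul] at this
    simp only [Matrix.vecMul, dotProduct, hξcq]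
    rw [← this]
    refine Finset.sum_congr rfl fun v _ => ?_
    rw [hMsq_entry]
  set d0 : b → ℤ := Matrix.vecMul (fun u => ξ (jcol (e u))) N.adjugate with hd0
  have hadjcast : Msq.adjugate = (N.adjugate).map (Int.cast : ℤ → ℚ) := by
    have := RingHom.map_adjugate (Int.castRingHom ℚ) N
    simpa [RingHom.mapMatrix_apply, hMsq] using this.symm
  have key : ∀ v : b, ((N.det : ℤ) : ℚ) * q v = ((d0 v : ℤ) : ℚ) := by
    intro v
    have h1 : Matrix.vecMul ξcq Msq.adjugate = Matrix.vecMul q (Msq * Msq.adjugate) := by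
      rw [← hvec, Matrix.vecMul_vecMul]
    have h2 : Matrix.vecMul q (Msq * Msq.adjugate) v = Msq.det * q v := by
      rw [Matrix.mul_adjugate]
      simp [Matrix.vecMul, dotProduct, Matrix.smul_apply, Matrix.one_apply, mul_ite,
        Finset.sum_ite_eq, mul_comm]
    have h3 : Matrix.vecMul ξcq Msq.adjugate v = ((d0 v : ℤ) : ℚ) := by
      simp only [Matrix.vecMul, dotProduct, hadjcast, Matrix.map_apply, hd0, hξcq, hξq]
      push_cast
      rfl
    rw [hdetcast] at h2
    rw [← h3, h1, h2]
  have hint : N.det • ξ = ∑ v : b, d0 v • β (idx v) := by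
    funext j
    have hqj := congrFun hq j
    simp only [Finset.sum_apply, Pi.smul_apply, smul_eq_mul] at hqj ⊢
    apply (Int.cast_injective (α := ℚ))
    push_cast [-Int.cast_det]
    calc ((N.det : ℤ) : ℚ) * ((ξ j : ℤ) : ℚ) = (N.det : ℚ) * ξq j := rfl
      _ = (N.det : ℚ) * ∑ v : b, q v * (v : Fin s → ℚ) j := by rw [hqj]
      _ = ∑ v : b, ((N.det : ℚ) * q v) * (v : Fin s → ℚ) j := by
            rw [Finset.mul_sum]; exact Finset.sum_congr rfl fun v _ => by ring
      _ = ∑ v : b, ((d0 v : ℚ)) * (v : Fin s → ℚ) j := by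
            exact Finset.sum_congr rfl fun v _ => by rw [key v]
      _ = ∑ v : b, ((d0 v : ℚ)) * ((β (idx v) j : ℤ) : ℚ) := by
            refine Finset.sum_congr rfl fun v _ => ?_
            rw [show ((v : Fin s → ℚ)) j = βq (idx v) j from by rw [hidx v]]
  -- packaging
  set k := Fintype.card b with hk
  let eb : Fin k ≃ b := (Fintype.equivFin b).symm
  set sgn : ℤ := if 0 ≤ N.det then 1 else -1 with hsgn
  refine ⟨k, idx ∘ eb, fun v => sgn * d0 (eb v), sgn * N.det,
    hidx_inj.comp eb.injective, ?_, ?_, ?_, ?_⟩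
  · intro v h0
    simp only [Function.comp_apply] at h0
    have : βq (idx (eb v)) = 0 := by
      rw [show βq (idx (eb v)) = fun j => ((β (idx (eb v)) j : ℤ) : ℚ) from rfl, h0]
      funext j; simp
    exact hb_ind.ne_zero (eb v) (by rw [← hidx (eb v)] at *; exact this)
  · rcases lt_or_ge N.det 0 with h | h
    · simp only [hsgn, if_neg (not_le.mpr h)]; omega
    · rcases h.lt_or_eq with h' | h'
      · simp only [hsgn, if_pos h]; omega
      · exact absurd h'.symm hdet_ne
  · have hb1 : |N.det| ≤ ∏ v : b, ∑ u : b, |N v u| := abs_det_le_prod_sum_abs N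
    have hb2 : ∀ v : b, ∑ u : b, |N v u| ≤ ∑ j, |β (idx v) j| := by
      intro v
      have hinj : Function.Injective (fun u : b => jcol (e u)) :=
        hjcol_inj.comp e.injective
      calc ∑ u : b, |β (idx v) (jcol (e u))|
          = ∑ j ∈ (Finset.univ.image fun u : b => jcol (e u)), |β (idx v) j| := by
            rw [Finset.sum_image (fun a _ c _ hac => hinj hac)]
        _ ≤ ∑ j, |β (idx v) j| := Finset.sum_le_sum_of_subset_of_nonneg
            (Finset.subset_univ _) (fun j _ _ => abs_nonneg _)
    have hsd : sgn * N.det = |N.det| := by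
      rcases le_or_gt 0 N.det with h | h
      · rw [hsgn, if_pos h, one_mul, abs_of_nonneg h]
      · rw [hsgn, if_neg (not_le.mpr h), abs_of_neg h]; ring
    rw [hsd]
    simp only [Function.comp_apply]
    rw [show (∏ v : Fin k, ∑ j, |β (idx (eb v)) j|) = ∏ v : b, ∑ j, |β (idx v) j|
      from Equiv.prod_comp eb (fun v => ∑ j, |β (idx v) j|)]
    exact le_trans hb1 (Finset.prod_le_prod (fun v _ => Finset.sum_nonneg fun u _ => abs_nonneg _)
      (fun v _ => hb2 v))
  · have h5 : (sgn * N.det) • ξ = sgn • (N.det • ξ) := (smul_smul sgn N.det ξ).symm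
    rw [h5, hint, Finset.smul_sum]
    simp only [Function.comp_apply]
    rw [show (∑ v : Fin k, (sgn * d0 (eb v)) • β (idx (eb v)))
        = ∑ v : b, (sgn * d0 v) • β (idx v)
      from Equiv.sum_comp eb (fun v => (sgn * d0 v) • β (idx v))]
    exact Finset.sum_congr rfl fun v _ => (smul_smul sgn (d0 v) (β (idx v)))


/-- Let `A` be an `r × s` integer matrix such that at most `t` rows have
absolute-value sum at most `3` and every other row has exactly one nonzero entry, of
absolute value `1` or `2`. Then every finite-order element of the abelian group
`ℤ^s / (row space of A)` has order at most `2 · 3 ^ t`. -/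
theorem cokernel_torsion_bound (r s t : ℕ) (A : Matrix (Fin r) (Fin s) ℤ)
    (S : Finset (Fin r)) (hS : S.card ≤ t)
    (h1 : ∀ i ∈ S, ∑ j, |A i j| ≤ 3)
    (h2 : ∀ i ∉ S, ∃ j, (|A i j| = 1 ∨ |A i j| = 2) ∧ ∀ j', j' ≠ j → A i j' = 0) :
    ∀ x : (Fin s → ℤ) ⧸ AddSubgroup.closure (Set.range fun i => A i),
      IsOfFinAddOrder x → addOrderOf x ≤ 2 * 3 ^ t := by
  classical
  set R := AddSubgroup.closure (Set.range fun i => A i) with hR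
  intro x
  refine QuotientAddGroup.induction_on x ?_
  intro z hx
  set n := addOrderOf ((z : (Fin s → ℤ) ⧸ R)) with hn
  have hn_pos : 0 < n := hx.addOrderOf_pos
  have hnz : ((n • z : Fin s → ℤ) : (Fin s → ℤ) ⧸ R) = 0 := by
    rw [QuotientAddGroup.mk_nsmul]
    exact addOrderOf_nsmul_eq_zero _
  have hmemR : (n : ℤ) • z ∈ R := by
    have := (QuotientAddGroup.eq_zero_iff (n • z)).mp hnz
    rwa [← natCast_zsmul] at this
  have hspan : (n : ℤ) • z ∈ Submodule.span ℤ (Set.range fun i => A i) := by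
    rw [hR, ← Submodule.span_int_eq_addSubgroupClosure] at hmemR
    exact hmemR
  obtain ⟨c, hc⟩ := (Submodule.mem_span_range_iff_exists_fun ℤ).mp hspan
  set Jp : Fin s → Prop := fun j => ∃ i, i ∉ S ∧ A i j ≠ 0 with hJp
  set ξ : Fin s → ℤ := fun j => if Jp j then 0 else z j with hξ
  set β : Fin r → (Fin s → ℤ) := fun i j => if i ∈ S then (if Jp j then 0 else A i j) else 0
    with hβ
  have hAnotS : ∀ i, i ∉ S → ∀ j, ¬ Jp j → A i j = 0 := by
    intro i hi j hj
    by_contra h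
    exact hj ⟨i, hi, h⟩
  have hβspan : (n : ℤ) • ξ ∈ Submodule.span ℤ (Set.range β) := by
    rw [Submodule.mem_span_range_iff_exists_fun]
    refine ⟨c, ?_⟩
    funext j
    simp only [Finset.sum_apply, Pi.smul_apply, smul_eq_mul]
    by_cases hj : Jp j
    · simp only [hβ, hξ, if_pos hj, ite_self, mul_zero, Finset.sum_const_zero]
    · have hcj := congrFun hc j
      simp only [Finset.sum_apply, Pi.smul_apply, smul_eq_mul] at hcj
      simp only [hβ, hξ, if_neg hj]
      rw [← hcj]
      refine Finset.sum_congr rfl fun i _ => ?_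
      by_cases hi : i ∈ S
      · rw [if_pos hi]
      · rw [if_neg hi, hAnotS i hi j hj, mul_zero]
  obtain ⟨k, ι, d, M, hι_inj, hιne, hMpos, hMle, hMξ⟩ := cramer_key β ξ n hn_pos hβspan
  have hιS : ∀ v, ι v ∈ S := by
    intro v
    by_contra h
    exact hιne v (funext fun j => by simp [hβ, if_neg h])
  have hkt : k ≤ t := by
    have hinj : Function.Injective (fun v : Fin k => (⟨ι v, hιS v⟩ : {i // i ∈ S})) :=
      fun a b hab => hι_inj (congrArg Subtype.val hab)
    calc k = Fintype.card (Fin k) := (Fintype.card_fin k).symm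
      _ ≤ Fintype.card {i // i ∈ S} := Fintype.card_le_of_injective _ hinj
      _ = S.card := Fintype.card_coe S
      _ ≤ t := hS
  have hM3 : M ≤ 3 ^ t := by
    have hrow : ∀ v : Fin k, ∑ j, |β (ι v) j| ≤ 3 := by
      intro v
      refine le_trans (Finset.sum_le_sum (fun j _ => ?_)) (h1 (ι v) (hιS v))
      rw [hβ]
      simp only [if_pos (hιS v)]
      by_cases hj : Jp j
      · rw [if_pos hj]; simp
      · rw [if_neg hj]
    calc M ≤ ∏ v, ∑ j, |β (ι v) j| := hMle
      _ ≤ ∏ _v : Fin k, (3 : ℤ) := Finset.prod_le_prod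
          (fun v _ => Finset.sum_nonneg fun j _ => abs_nonneg _) (fun v _ => hrow v)
      _ = 3 ^ k := by rw [Finset.prod_const, Finset.card_univ, Fintype.card_fin]
      _ ≤ 3 ^ t := pow_le_pow_right₀ (by norm_num) hkt
  set y : Fin s → ℤ := M • z - ∑ v, d v • A (ι v) with hy
  have hy_supp : ∀ j, ¬ Jp j → y j = 0 := by
    intro j hj
    have h6 := congrFun hMξ j
    simp only [Finset.sum_apply, Pi.smul_apply, smul_eq_mul] at h6
    have h7 : ξ j = z j := if_neg hj
    have h8 : ∀ v : Fin k, β (ι v) j = A (ι v) j := by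
      intro v
      simp only [hβ, if_pos (hιS v), if_neg hj]
    rw [h7] at h6
    simp only [hy, Pi.sub_apply, Pi.smul_apply, smul_eq_mul, Finset.sum_apply]
    rw [h6, sub_eq_zero]
    exact Finset.sum_congr rfl fun v _ => by rw [h8]
  have hsingle : ∀ j (m : ℤ), Jp j → Pi.single j (2 * m) ∈ R := by
    intro j m hj
    obtain ⟨i, hiS, hiA⟩ := hj
    obtain ⟨j0, hj0abs, hj0z⟩ := h2 i hiS
    have hjj0 : j = j0 := by
      by_contra h
      exact hiA (hj0z j h)
    subst hjj0
    have hrow : A i = Pi.single j (A i j) := by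
      funext j'
      rcases eq_or_ne j' j with h | h
      · subst h; simp
      · rw [hj0z j' h, Pi.single_apply, if_neg h]
    have hex : ∃ q : ℤ, q * A i j = 2 * m := by
      rcases hj0abs with h | h
      · rcases abs_eq (by norm_num : (0:ℤ) ≤ 1) |>.mp h with h' | h'
        · exact ⟨2 * m, by rw [h']; ring⟩
        · exact ⟨-(2 * m), by rw [h']; ring⟩
      · rcases abs_eq (by norm_num : (0:ℤ) ≤ 2) |>.mp h with h' | h'
        · exact ⟨m, by rw [h']; ring⟩
        · exact ⟨-m, by rw [h']; ring⟩
    obtain ⟨q, hq⟩ := hex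
    have : Pi.single j (2 * m) = q • A i := by
      rw [hrow]
      funext j'
      rcases eq_or_ne j' j with h | h
      · subst h; simp only [Pi.smul_apply, Pi.single_eq_same, smul_eq_mul]; rw [hq]
      · simp only [Pi.smul_apply, Pi.single_apply, if_neg h, smul_eq_mul, mul_zero]
    rw [this]
    refine AddSubgroup.zsmul_mem _ ?_ q
    rw [hR]
    exact AddSubgroup.subset_closure (Set.mem_range_self i)
  have h2y : (2 : ℤ) • y ∈ R := by
    have hy2 : (2 : ℤ) • y = ∑ j, Pi.single j (2 * y j) := by
      have := Finset.univ_sum_single (fun j => 2 * y j)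
      rw [this]
      funext j
      simp [smul_eq_mul]
    rw [hy2]
    refine AddSubgroup.sum_mem _ fun j _ => ?_
    by_cases hj : Jp j
    · exact hsingle j (y j) hj
    · rw [hy_supp j hj, mul_zero, Pi.single_zero]
      exact zero_mem _
  have hrowsum : (∑ v, d v • A (ι v)) ∈ R := by
    refine AddSubgroup.sum_mem _ fun v _ => AddSubgroup.zsmul_mem _ ?_ (d v)
    rw [hR]
    exact AddSubgroup.subset_closure (Set.mem_range_self (ι v))
  have hfinal : (2 * M : ℤ) • z ∈ R := by
    have hMz : M • z = (∑ v, d v • A (ι v)) + y := by rw [hy]; abel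
    have hdecomp : (2 * M : ℤ) • z = (2:ℤ) • (∑ v, d v • A (ι v)) + (2:ℤ) • y := by
      rw [mul_smul, hMz, smul_add]
    rw [hdecomp]
    exact AddSubgroup.add_mem _ (AddSubgroup.zsmul_mem _ hrowsum 2) h2y
  set m : ℕ := 2 * M.toNat with hm
  have hmM : (m : ℤ) = 2 * M := by
    rw [hm]
    push_cast [Int.toNat_of_nonneg hMpos.le]
    ring
  have hmsmul : ((m • z : Fin s → ℤ) : (Fin s → ℤ) ⧸ R) = 0 := by
    rw [QuotientAddGroup.eq_zero_iff, ← natCast_zsmul, hmM]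
    exact hfinal
  have hdvd : n ∣ m := by
    apply addOrderOf_dvd_of_nsmul_eq_zero
    rw [← QuotientAddGroup.mk_nsmul]
    exact hmsmul
  have hmpos : 0 < m := by rw [hm]; omega
  refine le_trans (Nat.le_of_dvd hmpos hdvd) ?_
  have h9 : M.toNat ≤ 3 ^ t := Int.toNat_le.mpr (by exact_mod_cast hM3)
  omega
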